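/- Suppose 0 ≤ s ≤ t and there is no layer parameter u of X with s < u ≤ t. Then the map σ : π₀L_{s,k}(X) → π₀L_{t,k}(X), sending each component at scale s to the unique component at scale t containing it, is a bijection. -/

import Mathlib

variable {Z : Type*} [MetricSpace Z]

/-- Vertex set `V_{s,k}(X)` of the degree-Rips complex: points of `X` having at
least `k` other points of `X` within distance `s`. -/
def drVertex (X : Set Z) (k : ℕ) (s : ℝ) : Set Z :=
  {x ∈ X | k ≤ {y ∈ X | y ≠ x ∧ dist x y ≤ s}.ncard}

/-- The generating relation for components: two vertices at distance at most `s`. -/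
def drStep (X : Set Z) (k : ℕ) (s : ℝ) (x y : Z) : Prop :=
  x ∈ drVertex X k s ∧ y ∈ drVertex X k s ∧ dist x y ≤ s

/-- `C` is a degree-Rips component (an element of `π₀ L_{s,k}(X)`): the class of
some vertex `x` under the equivalence relation generated by `drStep`. -/
def drComp (X : Set Z) (k : ℕ) (s : ℝ) (C : Set Z) : Prop :=
  ∃ x ∈ drVertex X k s, C = {y | Relation.ReflTransGen (drStep X k s) x y}

/-- `(t, C)` is a layer point of `Γ_k(X)`: it is an element of the hierarchy, and
every element `(s, D) ≤ (t, C)` with `s < t` has `D` a proper subset of `C`. -/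
def IsLayer (X : Set Z) (k : ℕ) (t : ℝ) (C : Set Z) : Prop :=
  0 ≤ t ∧ drComp X k t C ∧
    ∀ s D, 0 ≤ s → drComp X k s D → s < t → D ⊆ C → D ⊂ C

/-- `(t, C)` is a branch point of `Γ_k(X)`. -/
def IsBranch (X : Set Z) (k : ℕ) (t : ℝ) (C : Set Z) : Prop :=
  0 ≤ t ∧ drComp X k t C ∧
    ((∀ s D, 0 ≤ s → drComp X k s D → s < t → ¬D ⊆ C) ∨
      ∃ s₀, s₀ < t ∧ ∀ s, s₀ ≤ s → s < t →
        ∃ D₁ D₂, drComp X k s D₁ ∧ drComp X k s D₂ ∧ D₁ ≠ D₂ ∧ D₁ ⊆ C ∧ D₂ ⊆ C)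

/-- `(t, D)` is the maximal layer point below the element `(u, C)` of `Γ_k(X)`:
it is a layer point, `(t, D) ≤ (u, C)`, and every layer point below `(u, C)`
is below `(t, D)`. -/
def IsMaxLayerBelow (X : Set Z) (k : ℕ) (u : ℝ) (C : Set Z) (t : ℝ) (D : Set Z) : Prop :=
  IsLayer X k t D ∧ t ≤ u ∧ D ⊆ C ∧
    ∀ t' D', IsLayer X k t' D' → t' ≤ u → D' ⊆ C → t' ≤ t ∧ D' ⊆ D

/-- `t` is a layer parameter of `X`. -/
def IsLayerParam (X : Set Z) (k : ℕ) (t : ℝ) : Prop :=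
  ∃ C, IsLayer X k t C

/-- A stability map `θ : Y → X` (encoded as a map `Z → Z` carrying `Y` into `X`). -/
def IsStabilityMap (X Y : Set Z) (k : ℕ) (r : ℝ) (θ : Z → Z) : Prop :=
  (∀ y ∈ Y, θ y ∈ X) ∧
    ∀ s : ℝ, 0 ≤ s →
      (∀ y₁ y₂, y₁ ∈ drVertex Y k s → y₂ ∈ drVertex Y k s → dist y₁ y₂ ≤ s →
          θ y₁ ∈ drVertex X k (s + 2 * r) ∧ θ y₂ ∈ drVertex X k (s + 2 * r) ∧
          dist (θ y₁) (θ y₂) ≤ s + 2 * r) ∧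
      (∀ x ∈ drVertex X k s, ∃ C, drComp X k (s + 2 * r) C ∧ x ∈ C ∧ θ x ∈ C) ∧
      (∀ y ∈ drVertex Y k s, ∃ D, drComp Y k (s + 2 * r) D ∧ y ∈ D ∧ θ y ∈ D)

/-- Vertices of the degree-Rips complex at scale infinity: points with at least
`k` other points. -/
def drVertexInf (W : Set Z) (k : ℕ) : Set Z :=
  {w ∈ W | k ≤ {w' ∈ W | w' ≠ w}.ncard}

/-- Phase change numbers: distances between distinct vertices at scale infinity. -/
def IsPhaseChange (W : Set Z) (k : ℕ) (t : ℝ) : Prop :=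
  ∃ w₁ ∈ drVertexInf W k, ∃ w₂ ∈ drVertexInf W k, w₁ ≠ w₂ ∧ t = dist w₁ w₂

section Aux

private lemma drStep_symm' (X : Set Z) (k : ℕ) (s : ℝ) : Symmetric (drStep X k s) := by
  intro x y ⟨hx, hy, hd⟩
  exact ⟨hy, hx, by rwa [dist_comm]⟩

private lemma drVertex_mono (X : Set Z) (hXfin : X.Finite) (k : ℕ) {a b : ℝ} (hab : a ≤ b) :
    drVertex X k a ⊆ drVertex X k b := by
  intro x ⟨hxX, hk⟩
  refine ⟨hxX, le_trans hk (Set.ncard_le_ncard ?_ (hXfin.subset fun y hy => hy.1))⟩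
  intro y ⟨h1, h2, h3⟩; exact ⟨h1, h2, h3.trans hab⟩

private lemma drStep_mono (X : Set Z) (hXfin : X.Finite) (k : ℕ) {a b : ℝ} (hab : a ≤ b) {x y : Z}
    (h : drStep X k a x y) : drStep X k b x y :=
  ⟨drVertex_mono X hXfin k hab h.1, drVertex_mono X hXfin k hab h.2.1, h.2.2.trans hab⟩

/-- Class determination: if `C` is the component of `x₀` and `x ∈ C`, then `C` is also
the class of `x`. -/
private lemma comp_class_eq (X : Set Z) (k : ℕ) (s : ℝ) {C : Set Z} {x₀ x : Z}
    (hC : C = {y | Relation.ReflTransGen (drStep X k s) x₀ y}) (hx : x ∈ C) :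
    C = {y | Relation.ReflTransGen (drStep X k s) x y} := by
  have hsym : Symmetric (Relation.ReflTransGen (drStep X k s)) :=
    have : Std.Symm (drStep X k s) := ⟨drStep_symm' X k s⟩
    fun _ _ h => Relation.ReflTransGen.symmetric.symm _ _ h
  have h0x : Relation.ReflTransGen (drStep X k s) x₀ x := by rwa [hC] at hx
  ext y
  simp only [hC, Set.mem_setOf_eq]
  exact ⟨fun h => (hsym h0x).trans h, fun h => h0x.trans h⟩

/-- Distinct components at the same scale that are nested must be equal. -/
private lemma comp_eq_of_subset (X : Set Z) (k : ℕ) (s : ℝ) {C D : Set Z}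
    (hC : drComp X k s C) (hD : drComp X k s D) (h : C ⊆ D) : C = D := by
  obtain ⟨x, hx, hCx⟩ := hC
  obtain ⟨x₀, hx₀, hDx₀⟩ := hD
  have hxC : x ∈ C := by rw [hCx]; exact Relation.ReflTransGen.refl
  rw [hCx, ← comp_class_eq X k s hDx₀ (h hxC)]

/-- Sandwich: a set which is a component at scales `a` and `c` is a component at
any intermediate scale `b`. -/
private lemma comp_sandwich (X : Set Z) (hXfin : X.Finite) (k : ℕ) {a b c : ℝ} (hab : a ≤ b) (hbc : b ≤ c)
    {D : Set Z} (ha : drComp X k a D) (hc : drComp X k c D) : drComp X k b D := by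
  obtain ⟨x, hx, hDx⟩ := ha
  obtain ⟨x₀, hx₀, hDx₀⟩ := hc
  refine ⟨x, drVertex_mono X hXfin k hab hx, ?_⟩
  have hxD : x ∈ D := by rw [hDx]; exact Relation.ReflTransGen.refl
  have hc' : D = {y | Relation.ReflTransGen (drStep X k c) x y} :=
    comp_class_eq X k c hDx₀ hxD
  apply Set.Subset.antisymm
  · intro y hy
    rw [hDx] at hy
    exact Relation.ReflTransGen.mono (fun _ _ h => drStep_mono X hXfin k hab h) _ _ hy
  · intro y hy
    rw [hc']
    exact Set.mem_setOf_eq ▸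
      Relation.ReflTransGen.mono (fun _ _ h => drStep_mono X hXfin k hbc h) _ _ hy

/-- Local constancy: if no pairwise distance of `X` lies in `(a, b]`, then the
components at scales `a` and `b` coincide. -/
private lemma comp_const (X : Set Z) (hXfin : X.Finite) (k : ℕ) {a b : ℝ} (hab : a ≤ b)
    (hΔ : ∀ x ∈ X, ∀ y ∈ X, dist x y ≤ b → dist x y ≤ a) {D : Set Z} :
    drComp X k a D ↔ drComp X k b D := by
  have hV : drVertex X k a = drVertex X k b := by
    ext x
    constructor
    · exact fun h => drVertex_mono X hXfin k hab h
    · rintro ⟨hxX, hk⟩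
      refine ⟨hxX, le_trans hk (le_of_eq (congrArg Set.ncard ?_))⟩
      ext y
      exact ⟨fun ⟨h1, h2, h3⟩ => ⟨h1, h2, hΔ x hxX y h1 h3⟩,
        fun ⟨h1, h2, h3⟩ => ⟨h1, h2, h3.trans hab⟩⟩
  have hR : drStep X k a = drStep X k b := by
    funext x y
    simp only [drStep, hV, eq_iff_iff]
    constructor
    · rintro ⟨h1, h2, h3⟩; exact ⟨h1, h2, h3.trans hab⟩
    · rintro ⟨h1, h2, h3⟩
      exact ⟨h1, h2, hΔ x (by rw [← hV] at h1; exact h1.1) y (by rw [← hV] at h2; exact h2.1) h3⟩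
  simp only [drComp, hV, hR]

/-- Descent: in the absence of layer parameters in `(s, t]`, every component at a
scale `u ∈ (s, t]` is already a component at scale `s`. -/
private lemma descend (X : Set Z) (hXfin : X.Finite) (k : ℕ) (s t : ℝ) (hs : 0 ≤ s)
    (hgap : ∀ u, s < u → u ≤ t → ¬IsLayerParam X k u) :
    ∀ n : ℕ, ∀ u D, s < u → u ≤ t → drComp X k u D →
      (((fun p : Z × Z => dist p.1 p.2) '' (X ×ˢ X)) ∩ Set.Ioo s u).ncard ≤ n →
      drComp X k s D := by
  set Δ := (fun p : Z × Z => dist p.1 p.2) '' (X ×ˢ X) with hΔdef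
  have hΔfin : Δ.Finite := (hXfin.prod hXfin).image _
  have hΔmem : ∀ x ∈ X, ∀ y ∈ X, dist x y ∈ Δ := fun x hx y hy =>
    ⟨(x, y), Set.mk_mem_prod hx hy, rfl⟩
  intro n
  induction n using Nat.strong_induction_on with
  | _ n ih =>
  intro u D hsu hut hD hcard
  have h0u : 0 ≤ u := hs.trans hsu.le
  have hnl := hgap u hsu hut
  have hex : ¬ (∀ s' D', 0 ≤ s' → drComp X k s' D' → s' < u → D' ⊆ D → D' ⊂ D) :=
    fun h => hnl ⟨D, h0u, hD, h⟩
  push_neg at hex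
  obtain ⟨s', D', hs'0, hD', hs'u, hsub, hnssub⟩ := hex
  have hDD' : D' = D := by
    by_contra hne
    exact hnssub (HasSubset.Subset.ssubset_of_ne hsub hne)
  rw [hDD'] at hD'
  by_cases hs's : s' ≤ s
  · exact comp_sandwich X hXfin k hs's hsu.le hD' hD
  · push_neg at hs's
    set S := Δ ∩ Set.Ioc s s' with hSdef
    have hSfin : S.Finite := hΔfin.inter_of_left _
    by_cases hS : S.Nonempty
    · obtain ⟨a, haS, hamax⟩ : ∃ a ∈ S, ∀ b ∈ S, id a ≤ id b → id a = id b := by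
        obtain ⟨a, ha, hm⟩ := hSfin.exists_maximalFor id S hS
        exact ⟨a, ha, fun b hb h => le_antisymm h (hm hb h)⟩
      have hmax : ∀ b ∈ S, b ≤ a := by
        intro b hb
        by_contra hba
        push_neg at hba
        have := hamax b hb hba.le
        simp only [id] at this
        exact hba.ne this
      obtain ⟨haΔ, hsa, has'⟩ := haS
      have hcond : ∀ x ∈ X, ∀ y ∈ X, dist x y ≤ s' → dist x y ≤ a := by
        intro x hx y hy hds'
        by_contra hda
        push_neg at hda
        exact absurd (hmax _ ⟨hΔmem x hx y hy, hsa.trans hda, hds'⟩) (not_le_of_gt hda)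
      have hca : drComp X k a D := (comp_const X hXfin k has' hcond).mpr hD'
      have hau : a < u := lt_of_le_of_lt has' hs'u
      have hssub : Δ ∩ Set.Ioo s a ⊂ Δ ∩ Set.Ioo s u := by
        constructor
        · exact fun x ⟨h1, h2⟩ => ⟨h1, h2.1, h2.2.trans hau⟩
        · intro hsub2
          exact absurd (hsub2 ⟨haΔ, hsa, hau⟩).2.2 (lt_irrefl a)
      have hlt : (Δ ∩ Set.Ioo s a).ncard < n :=
        lt_of_lt_of_le (Set.ncard_lt_ncard hssub (hΔfin.inter_of_left _)) hcard
      exact ih _ hlt a D hsa (has'.trans hs'u.le |>.trans hut) hca le_rfl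
    · have hcond : ∀ x ∈ X, ∀ y ∈ X, dist x y ≤ s' → dist x y ≤ s := by
        intro x hx y hy hds'
        by_contra hda
        push_neg at hda
        exact hS ⟨dist x y, hΔmem x hx y hy, hda, hds'⟩
      exact (comp_const X hXfin k hs's.le hcond).mpr hD'

end Aux

/-- if `0 ≤ s ≤ t` and there is no layer parameter `u` of `X`
with `s < u ≤ t`, then the map `σ : π₀ L_{s,k}(X) → π₀ L_{t,k}(X)`, sending
each component at scale `s` to the component at scale `t` containing it, is a
bijection (stated as surjectivity and injectivity of containment). -/
theorem sigma_bijection_on_components (X : Set Z) (hXfin : X.Finite) (k : ℕ)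
    (s t : ℝ) (hs : 0 ≤ s) (hst : s ≤ t)
    (hgap : ∀ u, s < u → u ≤ t → ¬IsLayerParam X k u) :
    (∀ D, drComp X k t D → ∃ C, drComp X k s C ∧ C ⊆ D) ∧
      ∀ C₁ C₂ D, drComp X k s C₁ → drComp X k s C₂ → drComp X k t D →
        C₁ ⊆ D → C₂ ⊆ D → C₁ = C₂ := by
  have hdes : ∀ D, drComp X k t D → drComp X k s D := by
    intro D hD
    rcases eq_or_lt_of_le hst with heq | hlt
    · rwa [heq]
    · exact descend X hXfin k s t hs hgap _ t D hlt le_rfl hD le_rfl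
  constructor
  · exact fun D hD => ⟨D, hdes D hD, subset_rfl⟩
  · intro C₁ C₂ D h1 h2 hD hs1 hs2
    have hDs := hdes D hD
    rw [comp_eq_of_subset X k s h1 hDs hs1, comp_eq_of_subset X k s h2 hDs hs2]
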